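/- Every Hausdorff group topology on a discrete c-compact (equivalently, discrete hereditarily h-complete) group is anticompact: every compact subset is finite. -/

import Mathlib

universe u v

open Topology Filter Set Pointwise

/-- A (discrete) group is hereditarily h-complete (equivalently, c-compact, since it
is discrete) if every homomorphic image of every subgroup of it in a Hausdorff
topological group is closed.  (Homomorphisms from a discrete group are
automatically continuous.) -/
def DiscreteHereditarilyHComplete (G : Type u) [Group G] : Prop :=
  ∀ (S : Subgroup G) (H : Type v) [Group H] [TopologicalSpace H] [IsTopologicalGroup H]
    [T2Space H] (f : S →* H), IsClosed (Set.range f)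

namespace AntiC


/-- A chain of "neighborhoods of 1" in an abstract group. -/
structure NChain (T : Type u) [Group T] where
  U : ℕ → Set T
  one_mem : ∀ n, (1 : T) ∈ U n
  inv_mem : ∀ n, ∀ x ∈ U n, x⁻¹ ∈ U n
  mul_mem : ∀ n, ∀ x ∈ U (n + 1), ∀ y ∈ U (n + 1), x * y ∈ U n
  conj : ∀ (s : T) (n : ℕ), ∃ m, ∀ x ∈ U m, s * x * s⁻¹ ∈ U n
  sep : ∀ s : T, s ≠ 1 → ∃ n, s ∉ U n
  nontriv : ∀ n, ∃ e ∈ U n, e ≠ (1 : T)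

variable {T : Type u} [Group T] (C : NChain T)

lemma NChain.succ_subset (n : ℕ) : C.U (n + 1) ⊆ C.U n := fun x hx => by
  simpa using C.mul_mem n x hx 1 (C.one_mem _)

lemma NChain.anti {m n : ℕ} (h : m ≤ n) : C.U n ⊆ C.U m := by
  induction n with
  | zero => simpa [Nat.le_zero.mp h]
  | succ k ih =>
    rcases Nat.lt_or_ge m (k+1) with h' | h'
    · exact (C.succ_subset k).trans (ih (by omega))
    · have : m = k + 1 := by omega
      subst this; exact fun _ hx => hx

lemma NChain.mul_mem' {a b : ℕ} (n : ℕ) (ha : n + 1 ≤ a) (hb : n + 1 ≤ b)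
    {x y : T} (hx : x ∈ C.U a) (hy : y ∈ C.U b) : x * y ∈ C.U n :=
  C.mul_mem n x (C.anti ha hx) y (C.anti hb hy)

lemma NChain.triple {a b c : ℕ} (n : ℕ) (ha : n + 2 ≤ a) (hb : n + 2 ≤ b) (hc : n + 2 ≤ c)
    {x y z : T} (hx : x ∈ C.U a) (hy : y ∈ C.U b) (hz : z ∈ C.U c) :
    x * y * z ∈ C.U n :=
  C.mul_mem' n (by omega) (by omega) (C.mul_mem' (n+1) ha hb hx hy) hz

/-- Two-sided Cauchy sequences. -/
def NChain.Cau (x : ℕ → T) : Prop :=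
  ∀ n, ∃ N, ∀ p ≥ N, ∀ q ≥ N, (x p)⁻¹ * x q ∈ C.U n ∧ x p * (x q)⁻¹ ∈ C.U n

/-- Two-sided asymptotic equality. -/
def NChain.Equi (x y : ℕ → T) : Prop :=
  ∀ n, ∃ N, ∀ p ≥ N, (x p)⁻¹ * y p ∈ C.U n ∧ x p * (y p)⁻¹ ∈ C.U n

lemma NChain.cau_const (s : T) : C.Cau (fun _ => s) := by
  intro n; exact ⟨0, fun p _ q _ => by simpa using C.one_mem n⟩

lemma NChain.cau_inv {x : ℕ → T} (hx : C.Cau x) : C.Cau (fun p => (x p)⁻¹) := by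
  intro n
  obtain ⟨N, hN⟩ := hx n
  refine ⟨N, fun p hp q hq => ?_⟩
  obtain ⟨h1, h2⟩ := hN p hp q hq
  constructor
  · simpa using h2
  · simpa using h1

/-- Key technical lemma: conjugation by a Cauchy sequence is eventually-uniformly small. -/
lemma NChain.conj_small {z : ℕ → T} (hz : C.Cau z) (n : ℕ) :
    ∃ m N, ∀ p ≥ N, ∀ x ∈ C.U m, z p * x * (z p)⁻¹ ∈ C.U n := by
  obtain ⟨N, hN⟩ := hz (n + 2)
  obtain ⟨m, hm⟩ := C.conj (z N) (n + 2)
  refine ⟨m, N, fun p hp x hx => ?_⟩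
  have hb : z p * (z N)⁻¹ ∈ C.U (n + 2) := (hN p hp N le_rfl).2
  have hb' : (z p * (z N)⁻¹)⁻¹ ∈ C.U (n + 2) := C.inv_mem _ _ hb
  have hmid : z N * x * (z N)⁻¹ ∈ C.U (n + 2) := hm x hx
  have key : (z p * (z N)⁻¹) * (z N * x * (z N)⁻¹) * (z p * (z N)⁻¹)⁻¹ ∈ C.U n :=
    C.triple n le_rfl le_rfl le_rfl hb hmid hb'
  have : (z p * (z N)⁻¹) * (z N * x * (z N)⁻¹) * (z p * (z N)⁻¹)⁻¹ = z p * x * (z p)⁻¹ := by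
    group
  rwa [this] at key

lemma NChain.cau_mul {x y : ℕ → T} (hx : C.Cau x) (hy : C.Cau y) :
    C.Cau (fun p => x p * y p) := by
  intro n
  obtain ⟨m1, N1, hN1⟩ := C.conj_small (C.cau_inv hy) (n + 1)
  obtain ⟨m2, N2, hN2⟩ := C.conj_small hx (n + 1)
  obtain ⟨N3, hN3⟩ := hx m1
  obtain ⟨N4, hN4⟩ := hy (n + 1)
  obtain ⟨N5, hN5⟩ := hy m2
  obtain ⟨N6, hN6⟩ := hx (n + 1)
  refine ⟨N1 + N2 + N3 + N4 + N5 + N6, fun p hp q hq => ?_⟩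
  constructor
  · have h1 : (y p)⁻¹ * ((x p)⁻¹ * x q) * ((y p)⁻¹)⁻¹ ∈ C.U (n + 1) :=
      hN1 p (by omega) _ ((hN3 p (by omega) q (by omega)).1)
    have h2 : (y p)⁻¹ * y q ∈ C.U (n + 1) := (hN4 p (by omega) q (by omega)).1
    have := C.mul_mem n _ h1 _ h2
    have e : ((y p)⁻¹ * ((x p)⁻¹ * x q) * ((y p)⁻¹)⁻¹) * ((y p)⁻¹ * y q)
        = (x p * y p)⁻¹ * (x q * y q) := by group
    rwa [e] at this
  · have h1 : x p * (y p * (y q)⁻¹) * (x p)⁻¹ ∈ C.U (n + 1) :=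
      hN2 p (by omega) _ ((hN5 p (by omega) q (by omega)).2)
    have h2 : x p * (x q)⁻¹ ∈ C.U (n + 1) := (hN6 p (by omega) q (by omega)).2
    have := C.mul_mem n _ h1 _ h2
    have e : (x p * (y p * (y q)⁻¹) * (x p)⁻¹) * (x p * (x q)⁻¹)
        = (x p * y p) * (x q * y q)⁻¹ := by group
    rwa [e] at this


lemma NChain.equi_refl (x : ℕ → T) : C.Equi x x :=
  fun n => ⟨0, fun p _ => by simpa using C.one_mem n⟩

lemma NChain.equi_symm {x y : ℕ → T} (h : C.Equi x y) : C.Equi y x := by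
  intro n
  obtain ⟨N, hN⟩ := h n
  refine ⟨N, fun p hp => ?_⟩
  obtain ⟨h1, h2⟩ := hN p hp
  exact ⟨by simpa [mul_inv_rev] using C.inv_mem n _ h1,
    by simpa [mul_inv_rev] using C.inv_mem n _ h2⟩

lemma NChain.equi_trans {x y z : ℕ → T} (h : C.Equi x y) (h' : C.Equi y z) : C.Equi x z := by
  intro n
  obtain ⟨N1, hN1⟩ := h (n + 1)
  obtain ⟨N2, hN2⟩ := h' (n + 1)
  refine ⟨max N1 N2, fun p hp => ?_⟩
  have e1 := (hN1 p (le_trans (le_max_left _ _) hp)).1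
  have e2 := (hN2 p (le_trans (le_max_right _ _) hp)).1
  have f1 := (hN1 p (le_trans (le_max_left _ _) hp)).2
  have f2 := (hN2 p (le_trans (le_max_right _ _) hp)).2
  constructor
  · have := C.mul_mem n _ e1 _ e2
    rwa [show ((x p)⁻¹ * y p) * ((y p)⁻¹ * z p) = (x p)⁻¹ * z p by group] at this
  · have := C.mul_mem n _ f1 _ f2
    rwa [show (x p * (y p)⁻¹) * (y p * (z p)⁻¹) = x p * (z p)⁻¹ by group] at this

/-- The pre-completion: two-sided Cauchy sequences. -/
def Pre := {x : ℕ → T // C.Cau x}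

instance : Setoid (Pre C) where
  r x y := C.Equi x.1 y.1
  iseqv := ⟨fun x => C.equi_refl x.1, fun {_ _} h => C.equi_symm h,
    fun {_ _ _} h h' => C.equi_trans h h'⟩

lemma equi_mul {x y x' y' : Pre C} (hx : C.Equi x.1 x'.1) (hy : C.Equi y.1 y'.1) :
    C.Equi (fun p => x.1 p * y.1 p) (fun p => x'.1 p * y'.1 p) := by
  intro n
  obtain ⟨m1, N1, hN1⟩ := C.conj_small (C.cau_inv y.2) (n + 1)
  obtain ⟨m2, N2, hN2⟩ := C.conj_small x.2 (n + 1)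
  obtain ⟨N3, hN3⟩ := hx m1
  obtain ⟨N4, hN4⟩ := hy (n + 1)
  obtain ⟨N5, hN5⟩ := hy m2
  obtain ⟨N6, hN6⟩ := hx (n + 1)
  refine ⟨N1 + N2 + N3 + N4 + N5 + N6, fun p hp => ?_⟩
  constructor
  · have h1 : (y.1 p)⁻¹ * ((x.1 p)⁻¹ * x'.1 p) * ((y.1 p)⁻¹)⁻¹ ∈ C.U (n + 1) :=
      hN1 p (by omega) _ ((hN3 p (by omega)).1)
    have h2 : (y.1 p)⁻¹ * y'.1 p ∈ C.U (n + 1) := (hN4 p (by omega)).1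
    have := C.mul_mem n _ h1 _ h2
    rwa [show ((y.1 p)⁻¹ * ((x.1 p)⁻¹ * x'.1 p) * ((y.1 p)⁻¹)⁻¹) * ((y.1 p)⁻¹ * y'.1 p)
        = (x.1 p * y.1 p)⁻¹ * (x'.1 p * y'.1 p) by group] at this
  · have h1 : x.1 p * (y.1 p * (y'.1 p)⁻¹) * (x.1 p)⁻¹ ∈ C.U (n + 1) :=
      hN2 p (by omega) _ ((hN5 p (by omega)).2)
    have h2 : x.1 p * (x'.1 p)⁻¹ ∈ C.U (n + 1) := (hN6 p (by omega)).2
    have := C.mul_mem n _ h1 _ h2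
    rwa [show (x.1 p * (y.1 p * (y'.1 p)⁻¹) * (x.1 p)⁻¹) * (x.1 p * (x'.1 p)⁻¹)
        = (x.1 p * y.1 p) * (x'.1 p * y'.1 p)⁻¹ by group] at this

lemma equi_inv {x x' : Pre C} (hx : C.Equi x.1 x'.1) :
    C.Equi (fun p => (x.1 p)⁻¹) (fun p => (x'.1 p)⁻¹) := by
  intro n
  obtain ⟨N, hN⟩ := hx n
  refine ⟨N, fun p hp => ?_⟩
  obtain ⟨h1, h2⟩ := hN p hp
  exact ⟨by simpa using h2, by simpa using h1⟩

/-- The "completion". -/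
def Cpl := Quotient (instSetoidPre C)

def mk (x : Pre C) : Cpl C := Quotient.mk _ x

instance : One (Cpl C) := ⟨mk C ⟨fun _ => 1, C.cau_const 1⟩⟩

instance : Mul (Cpl C) :=
  ⟨Quotient.map₂ (fun x y => ⟨fun p => x.1 p * y.1 p, C.cau_mul x.2 y.2⟩)
    (fun x x' hx y y' hy => equi_mul C hx hy)⟩

instance : Inv (Cpl C) :=
  ⟨Quotient.map (fun x => ⟨fun p => (x.1 p)⁻¹, C.cau_inv x.2⟩)
    (fun x x' hx => equi_inv C hx)⟩

lemma mk_mul (x y : Pre C) :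
    mk C x * mk C y = mk C ⟨fun p => x.1 p * y.1 p, C.cau_mul x.2 y.2⟩ := rfl

lemma mk_inv (x : Pre C) :
    (mk C x)⁻¹ = mk C ⟨fun p => (x.1 p)⁻¹, C.cau_inv x.2⟩ := rfl

lemma mk_one : (1 : Cpl C) = mk C ⟨fun _ => 1, C.cau_const 1⟩ := rfl

lemma equi_of_eq {x y : Pre C} (h : ∀ p, x.1 p = y.1 p) : x ≈ y := by
  show C.Equi x.1 y.1
  have : x.1 = y.1 := funext h
  rw [this]; exact C.equi_refl _

instance : Group (Cpl C) where
  mul_assoc a b c := by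
    induction a using Quotient.ind
    induction b using Quotient.ind
    induction c using Quotient.ind
    exact Quotient.sound (equi_of_eq C fun p => mul_assoc _ _ _)
  one_mul a := by
    induction a using Quotient.ind
    exact Quotient.sound (equi_of_eq C fun p => one_mul _)
  mul_one a := by
    induction a using Quotient.ind
    exact Quotient.sound (equi_of_eq C fun p => mul_one _)
  inv_mul_cancel a := by
    induction a using Quotient.ind
    exact Quotient.sound (equi_of_eq C fun p => inv_mul_cancel _)

/-- The canonical homomorphism into the completion. -/
def phi : T →* Cpl C where
  toFun s := mk C ⟨fun _ => s, C.cau_const s⟩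
  map_one' := rfl
  map_mul' s t := rfl


lemma equi_iff (x y : Pre C) : mk C x = mk C y ↔ C.Equi x.1 y.1 :=
  ⟨fun h => Quotient.exact h, fun h => Quotient.sound h⟩

lemma phi_apply (s : T) : phi C s = mk C ⟨fun _ => s, C.cau_const s⟩ := rfl

/-- Eventually in `U n`. -/
def EvIn (x : ℕ → T) (n : ℕ) : Prop := ∃ N, ∀ p ≥ N, x p ∈ C.U n

/-- The basic neighborhoods of `1` in the completion. -/
def BB (n : ℕ) : Set (Cpl C) := {h | ∃ x : Pre C, EvIn C x.1 n ∧ mk C x = h}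

lemma BB_anti {m n : ℕ} (h : m ≤ n) : BB C n ⊆ BB C m := by
  rintro _ ⟨x, ⟨N, hN⟩, rfl⟩
  exact ⟨x, ⟨N, fun p hp => C.anti h (hN p hp)⟩, rfl⟩

lemma one_mem_BB (n : ℕ) : (1 : Cpl C) ∈ BB C n := by
  refine ⟨⟨fun _ => 1, C.cau_const 1⟩, ⟨0, fun p _ => C.one_mem n⟩, (mk_one C).symm⟩

lemma BB_mul {a b : ℕ} (n : ℕ) (ha : n + 1 ≤ a) (hb : n + 1 ≤ b)
    {g h : Cpl C} (hg : g ∈ BB C a) (hh : h ∈ BB C b) : g * h ∈ BB C n := by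
  obtain ⟨x, ⟨N1, hN1⟩, rfl⟩ := hg
  obtain ⟨y, ⟨N2, hN2⟩, rfl⟩ := hh
  refine ⟨⟨fun p => x.1 p * y.1 p, C.cau_mul x.2 y.2⟩, ⟨max N1 N2, fun p hp => ?_⟩,
    (mk_mul C x y).symm⟩
  exact C.mul_mem' n ha hb (hN1 p (le_trans (le_max_left _ _) hp))
    (hN2 p (le_trans (le_max_right _ _) hp))

lemma BB_inv {n : ℕ} {g : Cpl C} (hg : g ∈ BB C n) : g⁻¹ ∈ BB C n := by
  obtain ⟨x, ⟨N, hN⟩, rfl⟩ := hg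
  exact ⟨⟨fun p => (x.1 p)⁻¹, C.cau_inv x.2⟩, ⟨N, fun p hp => C.inv_mem n _ (hN p hp)⟩,
    (mk_inv C x).symm⟩

/-- Margin lemma: membership in `BB (n+1)` gives eventual membership of any representative. -/
lemma evIn_of_mem_BB {x : Pre C} {n : ℕ} (h : mk C x ∈ BB C (n + 1)) : EvIn C x.1 n := by
  obtain ⟨y, ⟨N1, hN1⟩, hxy⟩ := h
  have hequi : C.Equi y.1 x.1 := (equi_iff C y x).mp hxy
  obtain ⟨N2, hN2⟩ := hequi (n + 1)
  refine ⟨max N1 N2, fun p hp => ?_⟩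
  have h1 := hN1 p (le_trans (le_max_left _ _) hp)
  have h2 := (hN2 p (le_trans (le_max_right _ _) hp)).1
  have := C.mul_mem n _ h1 _ h2
  rwa [show y.1 p * ((y.1 p)⁻¹ * x.1 p) = x.1 p by group] at this

lemma mem_BB_phi {s : T} {n : ℕ} (h : s ∈ C.U n) : phi C s ∈ BB C n := by
  rw [phi_apply]
  exact ⟨_, ⟨0, fun p _ => h⟩, rfl⟩

lemma mem_U_of_phi_mem_BB {s : T} {n : ℕ} (h : phi C s ∈ BB C (n + 1)) : s ∈ C.U n := by
  rw [phi_apply] at h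
  obtain ⟨N, hN⟩ := evIn_of_mem_BB C h
  exact hN N le_rfl

lemma phi_ne_one {s : T} (h : s ≠ 1) : phi C s ≠ 1 := by
  intro he
  obtain ⟨n, hn⟩ := C.sep s h
  apply hn
  apply mem_U_of_phi_mem_BB C (n := n)
  rw [he]; exact one_mem_BB C _

/-- Separation in the completion. -/
lemma BB_sep {g : Cpl C} (h : g ≠ 1) : ∃ n, g ∉ BB C n := by
  induction g using Quotient.ind with | _ x =>
  have hx : ¬ C.Equi x.1 (fun _ => 1) := fun hc =>
    h (((equi_iff C x ⟨fun _ => 1, C.cau_const 1⟩).mpr hc).trans (mk_one C).symm)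
  have hfreq : ∃ n0, ∀ N, ∃ p ≥ N, x.1 p ∉ C.U n0 := by
    by_contra hcon
    push_neg at hcon
    apply hx
    intro n
    obtain ⟨N, hN⟩ := hcon n
    refine ⟨N, fun p hp => ⟨?_, ?_⟩⟩
    · simpa using C.inv_mem n _ (hN p hp)
    · simpa using hN p hp
  obtain ⟨n0, hn0⟩ := hfreq
  refine ⟨n0 + 2, fun hmem => ?_⟩
  have hmem' : mk C x ∈ BB C ((n0 + 1) + 1) := by
    have : n0 + 1 + 1 = n0 + 2 := by omega
    rw [this]; exact hmem
  obtain ⟨N, hN⟩ := evIn_of_mem_BB C hmem'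
  obtain ⟨p, hp, hnot⟩ := hn0 N
  exact hnot (C.anti (by omega) (hN p hp))


lemma BB_triple {a b c : ℕ} (n : ℕ) (ha : n + 2 ≤ a) (hb : n + 2 ≤ b) (hc : n + 2 ≤ c)
    {x y z : Cpl C} (hx : x ∈ BB C a) (hy : y ∈ BB C b) (hz : z ∈ BB C c) :
    x * y * z ∈ BB C n :=
  BB_mul C n (by omega) (by omega) (BB_mul C (n + 1) ha hb hx hy) hz

lemma conjB (g : Cpl C) (n : ℕ) : ∃ m, ∀ h ∈ BB C m, g * h * g⁻¹ ∈ BB C n := by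
  induction g using Quotient.ind with | _ z =>
  obtain ⟨m, N, hmN⟩ := C.conj_small z.2 n
  refine ⟨m, ?_⟩
  rintro _ ⟨x, ⟨N2, hN2⟩, rfl⟩
  have hg : (Quotient.mk (instSetoidPre C) z : Cpl C) = mk C z := rfl
  rw [hg, mk_mul, mk_inv]
  erw [mk_mul]
  refine ⟨_, ⟨max N N2, fun p hp => ?_⟩, rfl⟩
  exact hmN p (le_trans (le_max_left _ _) hp) _ (hN2 p (le_trans (le_max_right _ _) hp))

lemma approx (g : Cpl C) (n : ℕ) :
    ∃ s : T, g⁻¹ * phi C s ∈ BB C n ∧ phi C s * g⁻¹ ∈ BB C n := by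
  induction g using Quotient.ind with | _ x =>
  obtain ⟨N, hN⟩ := x.2 n
  refine ⟨x.1 N, ?_, ?_⟩
  · have hg : (Quotient.mk (instSetoidPre C) x : Cpl C) = mk C x := rfl
    rw [hg, phi_apply, mk_inv]
    erw [mk_mul]
    exact ⟨_, ⟨N, fun p hp => (hN p hp N le_rfl).1⟩, rfl⟩
  · have hg : (Quotient.mk (instSetoidPre C) x : Cpl C) = mk C x := rfl
    rw [hg, phi_apply, mk_inv]
    erw [mk_mul]
    exact ⟨_, ⟨N, fun p hp => (hN N le_rfl p hp).2⟩, rfl⟩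

/-- The group filter basis on the completion. -/
def gfb : GroupFilterBasis (Cpl C) where
  sets := Set.range (BB C)
  nonempty := ⟨BB C 0, 0, rfl⟩
  inter_sets := by
    rintro _ _ ⟨a, rfl⟩ ⟨b, rfl⟩
    exact ⟨BB C (max a b), ⟨max a b, rfl⟩,
      Set.subset_inter (BB_anti C (le_max_left _ _)) (BB_anti C (le_max_right _ _))⟩
  one' := by rintro _ ⟨n, rfl⟩; exact one_mem_BB C n
  mul' := by
    rintro _ ⟨n, rfl⟩
    refine ⟨BB C (n + 1), ⟨n + 1, rfl⟩, ?_⟩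
    rintro _ ⟨a, ha, b, hb, rfl⟩
    exact BB_mul C n le_rfl le_rfl ha hb
  inv' := by
    rintro _ ⟨n, rfl⟩
    exact ⟨BB C n, ⟨n, rfl⟩, fun h hh => BB_inv C hh⟩
  conj' := by
    rintro x₀ _ ⟨n, rfl⟩
    obtain ⟨m, hm⟩ := conjB C x₀ n
    exact ⟨BB C m, ⟨m, rfl⟩, fun h hh => hm h hh⟩

/-- The main abstract theorem: no countable group carrying an `NChain` can have all
homomorphic images in Hausdorff topological groups closed. -/
theorem core [Countable T] (C : NChain T)
    (hyp : ∀ (H : Type u) [Group H] [TopologicalSpace H] [IsTopologicalGroup H] [T2Space H]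
      (f : T →* H), IsClosed (Set.range f)) : False := by
  classical
  letI topo : TopologicalSpace (Cpl C) := (gfb C).topology
  haveI htg : IsTopologicalGroup (Cpl C) := (gfb C).isTopologicalGroup
  have hBBnhds : ∀ n, BB C n ∈ 𝓝 (1 : Cpl C) := fun n =>
    (gfb C).mem_nhds_one (by exact ⟨n, rfl⟩)
  haveI ht2 : T2Space (Cpl C) := by
    apply IsTopologicalGroup.t2Space_of_one_sep
    intro x hx
    obtain ⟨n, hn⟩ := BB_sep C hx
    exact ⟨BB C n, hBBnhds n, hn⟩
  have hcl : IsClosed (Set.range (phi C)) := hyp (Cpl C) (phi C)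
  -- density of the range
  have hdense : ∀ h : Cpl C, h ∈ closure (Set.range (phi C)) := by
    intro h
    rw [mem_closure_iff_nhds]
    intro t ht
    rcases ((gfb C).nhds_hasBasis h).mem_iff.mp ht with ⟨V, hV, hVt⟩
    obtain ⟨n, rfl⟩ := hV
    obtain ⟨s, hs1, _⟩ := approx C h n
    refine ⟨phi C s, hVt ⟨h⁻¹ * phi C s, hs1, ?_⟩, ⟨s, rfl⟩⟩
    show h * (h⁻¹ * phi C s) = phi C s
    rw [mul_inv_cancel_left]
  have hsurj : Function.Surjective (phi C) := by
    intro h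
    have : h ∈ Set.range (phi C) := by rw [← hcl.closure_eq]; exact hdense h
    exact this
  -- a surjective enumeration of the completion
  obtain ⟨e, he⟩ := exists_surjective_nat T
  set ψ : ℕ → Cpl C := fun k => phi C (e k) with hψdef
  have hψ : Function.Surjective ψ := fun h => by
    obtain ⟨s, hs⟩ := hsurj h
    obtain ⟨k, hk⟩ := he s
    exact ⟨k, by rw [hψdef]; simp only; rw [hk, hs]⟩
  -- the recursive construction
  have step : ∀ (w : Cpl C) (c k : ℕ), ∃ (w' : Cpl C) (c' : ℕ),
      (w⁻¹ * w' ∈ BB C c) ∧ (w' * w⁻¹ ∈ BB C c) ∧ c + 2 ≤ c' ∧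
      ∀ h ∈ BB C (c' - 5), w' * h ≠ ψ k := by
    intro w c k
    obtain ⟨m, hm⟩ := conjB C w c
    have hw' : ∃ w' : Cpl C, w' ≠ ψ k ∧ w⁻¹ * w' ∈ BB C c ∧ w' * w⁻¹ ∈ BB C c := by
      by_cases hk : w = ψ k
      · obtain ⟨ee, hee, hne⟩ := C.nontriv (max c m)
        refine ⟨w * phi C ee, ?_, ?_, ?_⟩
        · intro hcontra
          apply phi_ne_one C hne
          have h1 : w * phi C ee = w * 1 := by rw [hcontra, ← hk, mul_one]
          exact mul_left_cancel h1
        · rw [inv_mul_cancel_left]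
          exact BB_anti C (le_max_left _ _) (mem_BB_phi C hee)
        · have heq : (w * phi C ee) * w⁻¹ = w * phi C ee * w⁻¹ := rfl
          rw [heq]
          exact hm _ (BB_anti C (le_max_right _ _) (mem_BB_phi C hee))
      · refine ⟨w, hk, ?_, ?_⟩
        · rw [inv_mul_cancel]; exact one_mem_BB C c
        · rw [mul_inv_cancel]; exact one_mem_BB C c
    obtain ⟨w', hne, h1, h2⟩ := hw'
    have hne2 : w'⁻¹ * ψ k ≠ 1 := by
      intro hz
      exact hne (inv_mul_eq_one.mp hz)
    obtain ⟨n0, hn0⟩ := BB_sep C hne2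
    refine ⟨w', max (c + 2) (n0 + 5), h1, h2, le_max_left _ _, ?_⟩
    intro h hh hcontra
    apply hn0
    have hhe : h = w'⁻¹ * ψ k := by rw [← hcontra]; group
    rw [← hhe]
    exact BB_anti C (by omega) hh
  let F : ℕ → Cpl C × ℕ := fun k =>
    Nat.rec ((1 : Cpl C), 10)
      (fun k ih => ((step ih.1 ih.2 k).choose, (step ih.1 ih.2 k).choose_spec.choose)) k
  have hF : ∀ k, ((F k).1)⁻¹ * (F (k + 1)).1 ∈ BB C (F k).2 ∧
      (F (k + 1)).1 * ((F k).1)⁻¹ ∈ BB C (F k).2 ∧ ((F k).2) + 2 ≤ (F (k + 1)).2 ∧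
      ∀ h ∈ BB C ((F (k + 1)).2 - 5), (F (k + 1)).1 * h ≠ ψ k := by
    intro k
    exact (step (F k).1 (F k).2 k).choose_spec.choose_spec
  have hc0 : (F 0).2 = 10 := rfl
  have hcmono : ∀ k, (F k).2 + 2 ≤ (F (k + 1)).2 := fun k => (hF k).2.2.1
  have hclow : ∀ k, 10 + 2 * k ≤ (F k).2 := by
    intro k
    induction k with
    | zero => omega
    | succ k ih => have := hcmono k; omega
  have hcleAux : ∀ (j d : ℕ), (F j).2 ≤ (F (j + d)).2 := by
    intro j d
    induction d with
    | zero => exact le_rfl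
    | succ d ih =>
      show (F j).2 ≤ (F ((j + d) + 1)).2
      have := hcmono (j + d); omega
  have hcle : ∀ {j l : ℕ}, j ≤ l → (F j).2 ≤ (F l).2 := by
    intro j l hjl
    have := hcleAux j (l - j)
    rwa [Nat.add_sub_cancel' hjl] at this
  -- telescoping
  have tel : ∀ (d j : ℕ), ((F j).1)⁻¹ * (F (j + d)).1 ∈ BB C ((F j).2 - 1) ∧
      (F (j + d)).1 * ((F j).1)⁻¹ ∈ BB C ((F j).2 - 1) := by
    intro d
    induction d with
    | zero =>
      intro j
      constructor
      · rw [Nat.add_zero, inv_mul_cancel]; exact one_mem_BB C _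
      · rw [Nat.add_zero, mul_inv_cancel]; exact one_mem_BB C _
    | succ d ih =>
      intro j
      have hidx : j + (d + 1) = (j + 1) + d := by omega
      have h10 := hclow j
      have h11 := hcmono j
      constructor
      · have hfirst : ((F j).1)⁻¹ * (F (j + 1)).1 ∈ BB C ((F j).2) := (hF j).1
        have hsecond : ((F (j + 1)).1)⁻¹ * (F ((j + 1) + d)).1 ∈ BB C ((F (j + 1)).2 - 1) :=
          (ih (j + 1)).1
        have hmul := BB_mul C (a := (F j).2) (b := (F (j + 1)).2 - 1) ((F j).2 - 1)
          (by omega) (by omega) hfirst hsecond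
        rw [show (((F j).1)⁻¹ * (F (j + 1)).1) * (((F (j + 1)).1)⁻¹ * (F ((j + 1) + d)).1)
            = ((F j).1)⁻¹ * (F ((j + 1) + d)).1 by group] at hmul
        rw [hidx]
        exact hmul
      · have hfirst : (F ((j + 1) + d)).1 * ((F (j + 1)).1)⁻¹ ∈ BB C ((F (j + 1)).2 - 1) :=
          (ih (j + 1)).2
        have hsecond : (F (j + 1)).1 * ((F j).1)⁻¹ ∈ BB C ((F j).2) := (hF j).2.1
        have hmul := BB_mul C (a := (F (j + 1)).2 - 1) (b := (F j).2) ((F j).2 - 1)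
          (by omega) (by omega) hfirst hsecond
        rw [show ((F ((j + 1) + d)).1 * ((F (j + 1)).1)⁻¹) * ((F (j + 1)).1 * ((F j).1)⁻¹)
            = (F ((j + 1) + d)).1 * ((F j).1)⁻¹ by group] at hmul
        rw [hidx]
        exact hmul
  have tel' : ∀ {j l : ℕ}, j ≤ l → ((F j).1)⁻¹ * (F l).1 ∈ BB C ((F j).2 - 1) ∧
      (F l).1 * ((F j).1)⁻¹ ∈ BB C ((F j).2 - 1) := by
    intro j l hjl
    have : l = j + (l - j) := by omega
    rw [this]
    exact tel (l - j) j
  -- approximating sequence in T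
  have happ : ∀ k, ∃ s : T,
      ((F k).1)⁻¹ * phi C s ∈ BB C ((F k).2) ∧ phi C s * ((F k).1)⁻¹ ∈ BB C ((F k).2) :=
    fun k => approx C (F k).1 (F k).2
  choose s hs1 hs2 using happ
  have key : ∀ j l, j ≤ l → (s j)⁻¹ * s l ∈ C.U ((F j).2 - 4) ∧
      s j * (s l)⁻¹ ∈ C.U ((F j).2 - 4) := by
    intro j l hjl
    have h10 := hclow j
    have hjle := hcle hjl
    constructor
    · have t1 : (phi C (s j))⁻¹ * (F j).1 ∈ BB C ((F j).2) := by
        have := BB_inv C (hs1 j)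
        rwa [mul_inv_rev, inv_inv] at this
      have t2 := (tel' hjl).1
      have t3 : ((F l).1)⁻¹ * phi C (s l) ∈ BB C ((F j).2) :=
        BB_anti C hjle (hs1 l)
      have := BB_triple C (a := (F j).2) (b := (F j).2 - 1) (c := (F j).2) ((F j).2 - 3)
        (by omega) (by omega) (by omega) t1 t2 t3
      rw [show ((phi C (s j))⁻¹ * (F j).1) * (((F j).1)⁻¹ * (F l).1) *
          (((F l).1)⁻¹ * phi C (s l)) = (phi C (s j))⁻¹ * phi C (s l) by group] at this
      have hphi : (phi C (s j))⁻¹ * phi C (s l) = phi C ((s j)⁻¹ * s l) := by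
        rw [map_mul, map_inv]
      rw [hphi] at this
      have : phi C ((s j)⁻¹ * s l) ∈ BB C (((F j).2 - 4) + 1) := by
        have he : ((F j).2 - 4) + 1 = (F j).2 - 3 := by omega
        rw [he]; exact this
      exact mem_U_of_phi_mem_BB C this
    · have t1 : phi C (s j) * ((F j).1)⁻¹ ∈ BB C ((F j).2) := hs2 j
      have t2 : (F j).1 * ((F l).1)⁻¹ ∈ BB C ((F j).2 - 1) := by
        have := BB_inv C (tel' hjl).2
        rwa [mul_inv_rev, inv_inv] at this
      have t3 : (F l).1 * (phi C (s l))⁻¹ ∈ BB C ((F j).2) := by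
        have := BB_inv C (BB_anti C hjle (hs2 l))
        rwa [mul_inv_rev, inv_inv] at this
      have := BB_triple C (a := (F j).2) (b := (F j).2 - 1) (c := (F j).2) ((F j).2 - 3)
        (by omega) (by omega) (by omega) t1 t2 t3
      rw [show (phi C (s j) * ((F j).1)⁻¹) * ((F j).1 * ((F l).1)⁻¹) *
          ((F l).1 * (phi C (s l))⁻¹) = phi C (s j) * (phi C (s l))⁻¹ by group] at this
      have hphi : phi C (s j) * (phi C (s l))⁻¹ = phi C (s j * (s l)⁻¹) := by
        rw [map_mul, map_inv]
      rw [hphi] at this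
      have : phi C (s j * (s l)⁻¹) ∈ BB C (((F j).2 - 4) + 1) := by
        have he : ((F j).2 - 4) + 1 = (F j).2 - 3 := by omega
        rw [he]; exact this
      exact mem_U_of_phi_mem_BB C this
  have scau : C.Cau s := by
    intro n
    refine ⟨n + 4, fun p hp q hq => ?_⟩
    rcases le_total p q with h | h
    · have hk := key p q h
      have h10 := hclow p
      have hle : n ≤ (F p).2 - 4 := by omega
      exact ⟨C.anti hle hk.1, C.anti hle hk.2⟩
    · have hk := key q p h
      have h10 := hclow q
      have hle : n ≤ (F q).2 - 4 := by omega
      constructor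
      · have := C.inv_mem _ _ (C.anti hle hk.1)
        rwa [mul_inv_rev, inv_inv] at this
      · have := C.inv_mem _ _ (C.anti hle hk.2)
        rwa [mul_inv_rev, inv_inv] at this
  set wlim : Cpl C := mk C ⟨s, scau⟩ with hwlim
  have hlim : ∀ j, ((F j).1)⁻¹ * wlim ∈ BB C ((F j).2 - 5) := by
    intro j
    have h10 := hclow j
    have hmid : (phi C (s j))⁻¹ * wlim ∈ BB C ((F j).2 - 4) := by
      have hcs : C.Cau (fun q => (s j)⁻¹ * s q) := C.cau_mul (C.cau_const ((s j)⁻¹)) scau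
      have heq : (phi C (s j))⁻¹ * wlim = mk C ⟨fun q => (s j)⁻¹ * s q, hcs⟩ := by
        rw [hwlim, phi_apply]
        erw [mk_inv, mk_mul]
      rw [heq]
      exact ⟨_, ⟨j, fun q hq => (key j q hq).1⟩, rfl⟩
    have hmul := BB_mul C (a := (F j).2) (b := (F j).2 - 4) ((F j).2 - 5)
      (by omega) (by omega) (hs1 j) hmid
    rwa [show (((F j).1)⁻¹ * phi C (s j)) * ((phi C (s j))⁻¹ * wlim)
        = ((F j).1)⁻¹ * wlim by group] at hmul
  obtain ⟨k, hk⟩ := hψ wlim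
  apply (hF k).2.2.2 (((F (k + 1)).1)⁻¹ * wlim) (hlim (k + 1))
  rw [mul_inv_cancel_left]
  exact hk.symm

/-- Build an `NChain` on a subgroup of a Hausdorff topological group, given a surjective
enumeration of the subgroup and a set `E` accumulating at `1`. -/
noncomputable def buildChain {G : Type u} [Group G] [TopologicalSpace G] [IsTopologicalGroup G]
    [T2Space G] (S : Subgroup G) (g : ℕ → S) (hg : Function.Surjective g)
    (E : Set G) (hE : ∀ W ∈ 𝓝 (1 : G), ∃ z ∈ E, z ≠ 1 ∧ z ∈ W) (hES : E ⊆ (S : Set G)) :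
    NChain ↥S := by
  -- symmetric halving
  have ex : ∀ (W : Set G), W ∈ 𝓝 (1 : G) →
      ∃ V : Set G, (V ∈ 𝓝 (1 : G) ∧ V⁻¹ = V) ∧ V * V ⊆ W := by
    intro W hW
    obtain ⟨V0, hV0, hmul⟩ := exists_nhds_one_split hW
    refine ⟨V0 ∩ V0⁻¹, ⟨Filter.inter_mem hV0 (inv_mem_nhds_one G hV0), ?_⟩, ?_⟩
    · rw [Set.inter_inv, inv_inv, Set.inter_comm]
    · rintro x ⟨a, ⟨ha, _⟩, b, ⟨hb, _⟩, rfl⟩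
      exact hmul a ha b hb
  have stepex : ∀ (W : Set G), (W ∈ 𝓝 (1 : G) ∧ W⁻¹ = W) → ∀ n : ℕ,
      ∃ V : Set G, (V ∈ 𝓝 (1 : G) ∧ V⁻¹ = V) ∧ (V * V ⊆ W) ∧
        (∀ i : Fin (n + 1), ∀ x ∈ V * V, ((g i : G)) * x * ((g i : G))⁻¹ ∈ W) ∧
        (∀ x ∈ V * V, x = 1 ∨ ∀ i : Fin (n + 1), ((g i : G)) ≠ x) := by
    intro W hW n
    have hconj : ∀ i : Fin (n + 1),
        {x : G | ((g i : G)) * x * ((g i : G))⁻¹ ∈ W} ∈ 𝓝 (1 : G) := by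
      intro i
      have hcont : Continuous fun x : G => ((g i : G)) * x * ((g i : G))⁻¹ :=
        (continuous_const.mul continuous_id).mul continuous_const
      have h1 : ((g i : G)) * 1 * ((g i : G))⁻¹ = 1 := by simp
      exact (hcont.continuousAt (x := (1 : G))).preimage_mem_nhds
        (show W ∈ 𝓝 (((g i : G)) * 1 * ((g i : G))⁻¹) by rw [h1]; exact hW.1)
    have hA : ((fun i : Fin (n + 1) => ((g i : G))) '' Set.univ \ {1})ᶜ ∈ 𝓝 (1 : G) := by
      refine IsOpen.mem_nhds ?_ ?_
      · exact (((Set.finite_univ).image _).diff (t := {1})).isClosed.isOpen_compl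
      · intro h
        exact (Set.mem_diff _).mp h |>.2 rfl
    have hcore : (W ∩ (⋂ i : Fin (n + 1), {x : G | ((g i : G)) * x * ((g i : G))⁻¹ ∈ W}) ∩
        ((fun i : Fin (n + 1) => ((g i : G))) '' Set.univ \ {1})ᶜ) ∈ 𝓝 (1 : G) := by
      refine Filter.inter_mem (Filter.inter_mem hW.1 ?_) hA
      exact Filter.iInter_mem.mpr hconj
    obtain ⟨V, hV, hVV⟩ := ex _ hcore
    refine ⟨V, hV, ?_, ?_, ?_⟩
    · exact fun x hx => ((hVV hx).1).1
    · exact fun i x hx => Set.mem_iInter.mp ((hVV hx).1).2 i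
    · intro x hx
      have := (hVV hx).2
      by_cases hx1 : x = 1
      · exact Or.inl hx1
      · refine Or.inr fun i hi => ?_
        exact this ⟨⟨i, Set.mem_univ i, hi⟩, hx1⟩
  -- the recursive chain of symmetric neighborhoods
  let VF : ℕ → {V : Set G // V ∈ 𝓝 (1 : G) ∧ V⁻¹ = V} := fun n =>
    Nat.rec ⟨Set.univ, Filter.univ_mem, by simp⟩
      (fun n ih => ⟨(stepex ih.1 ih.2 n).choose, (stepex ih.1 ih.2 n).choose_spec.1⟩) n
  have hVF : ∀ n, ((VF (n + 1)).1 * (VF (n + 1)).1 ⊆ (VF n).1) ∧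
      (∀ i : Fin (n + 1), ∀ x ∈ (VF (n + 1)).1 * (VF (n + 1)).1,
        ((g i : G)) * x * ((g i : G))⁻¹ ∈ (VF n).1) ∧
      (∀ x ∈ (VF (n + 1)).1 * (VF (n + 1)).1, x = 1 ∨ ∀ i : Fin (n + 1), ((g i : G)) ≠ x) :=
    fun n => (stepex (VF n).1 (VF n).2 n).choose_spec.2
  have hone : ∀ n, (1 : G) ∈ (VF n).1 := fun n => mem_of_mem_nhds (VF n).2.1
  have hmulVV : ∀ n, ∀ x ∈ (VF (n + 1)).1, ∀ y ∈ (VF (n + 1)).1, x * y ∈ (VF n).1 :=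
    fun n x hx y hy => (hVF n).1 (Set.mul_mem_mul hx hy)
  have hanti : ∀ n, (VF (n + 1)).1 ⊆ (VF n).1 := fun n x hx => by
    simpa using hmulVV n x hx 1 (hone (n + 1))
  have hantile : ∀ {m n : ℕ}, m ≤ n → (VF n).1 ⊆ (VF m).1 := by
    intro m n h
    induction n with
    | zero =>
      have hm : m = 0 := Nat.le_zero.mp h
      subst hm; exact fun _ hx => hx
    | succ k ih =>
      rcases Nat.lt_or_ge m (k + 1) with h' | h'
      · exact (hanti k).trans (ih (by omega))
      · have : m = k + 1 := by omega
        subst this; exact fun _ hx => hx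
  refine
    { U := fun n => Subtype.val ⁻¹' (VF n).1
      one_mem := fun n => hone n
      inv_mem := ?_
      mul_mem := ?_
      conj := ?_
      sep := ?_
      nontriv := ?_ }
  · intro n x hx
    have hsym := (VF n).2.2
    show ((x⁻¹ : ↥S) : G) ∈ (VF n).1
    rw [← hsym]
    simpa using hx
  · intro n x hx y hy
    exact hmulVV n _ hx _ hy
  · intro s n
    obtain ⟨i, rfl⟩ := hg s
    refine ⟨max (i + 1) (n + 1), fun x hx => ?_⟩
    have hx2 : (x : G) ∈ (VF (max i n + 1)).1 * (VF (max i n + 1)).1 := by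
      have hmle : max i n + 1 ≤ max (i + 1) (n + 1) := by omega
      have hx' : (x : G) ∈ (VF (max i n + 1)).1 := hantile hmle hx
      have : (x : G) = (x : G) * 1 := by simp
      rw [this]
      exact Set.mul_mem_mul hx' (hone (max i n + 1))
    have := (hVF (max i n)).2.1 ⟨i, by omega⟩ _ hx2
    show ((g i : G)) * (x : G) * ((g i : G))⁻¹ ∈ (VF n).1
    exact hantile (le_max_right i n) this
  · intro s hs
    obtain ⟨i, rfl⟩ := hg s
    refine ⟨i + 1, fun hmem => ?_⟩
    have hx2 : ((g i : G)) ∈ (VF (i + 1)).1 * (VF (i + 1)).1 := by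
      have : ((g i : G)) = ((g i : G)) * 1 := by simp
      rw [this]
      exact Set.mul_mem_mul hmem (hone (i + 1))
    rcases (hVF i).2.2 _ hx2 with h1 | h2
    · exact hs (Subtype.ext h1)
    · exact h2 ⟨i, by omega⟩ rfl
  · intro n
    obtain ⟨z, hzE, hz1, hzV⟩ := hE (VF n).1 (VF n).2.1
    exact ⟨⟨z, hES hzE⟩, hzV, fun h => hz1 (congrArg Subtype.val h)⟩


end AntiC

theorem anticompact_of_discrete_cCompact {G : Type u} [Group G]
    (hG : DiscreteHereditarilyHComplete.{u, u} G)
    (t : TopologicalSpace G) (htg : @IsTopologicalGroup G t _) (ht2 : @T2Space G t)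
    (K : Set G) (hK : @IsCompact G t K) : K.Finite := by
  letI := t
  by_contra hfin
  have hinf : K.Infinite := hfin
  -- a countably infinite subset of K
  let emb : ℕ ↪ K := hinf.natEmbedding
  let df : ℕ → G := fun n => ((emb n : G))
  have hdfinj : Function.Injective df := fun a b h => emb.injective (Subtype.ext h)
  set D : Set G := Set.range df with hDdef
  have hDK : D ⊆ K := by rintro _ ⟨n, rfl⟩; exact (emb n).2
  set S : Subgroup G := Subgroup.closure D with hSdef
  have hDS : D ⊆ (S : Set G) := Subgroup.subset_closure
  -- the subgroup S is closed
  have hSclosed : IsClosed (S : Set G) := by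
    have h1 := hG S G S.subtype
    have h2 : Set.range S.subtype = (S : Set G) := by
      rw [Subgroup.coe_subtype, Subtype.range_coe]
    rwa [h2] at h1
  -- a cluster point of D
  set L : Filter G := Filter.map df Filter.cofinite with hLdef
  haveI : L.NeBot := Filter.map_neBot
  have hLK : L ≤ 𝓟 K := by
    rw [le_principal_iff, hLdef, Filter.mem_map]
    exact Filter.univ_mem' fun n => hDK ⟨n, rfl⟩
  obtain ⟨a, haK, ha⟩ := hK hLK
  have haS : a ∈ (S : Set G) := by
    have hDL : D ∈ L := by
      rw [hLdef, Filter.mem_map]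
      exact Filter.univ_mem' fun n => ⟨n, rfl⟩
    have hclD : a ∈ closure D := mem_closure_iff_clusterPt.mpr (ha.mono (le_principal_iff.mpr hDL))
    exact (closure_minimal hDS hSclosed) hclD
  -- the accumulation set E
  set E : Set G := (fun x => a⁻¹ * x) '' (D \ {a}) with hEdef
  have hES : E ⊆ (S : Set G) := by
    rintro _ ⟨d, ⟨hd, _⟩, rfl⟩
    exact S.mul_mem (S.inv_mem haS) (hDS hd)
  have hE : ∀ W ∈ 𝓝 (1 : G), ∃ z ∈ E, z ≠ 1 ∧ z ∈ W := by
    intro W hW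
    have hcont : Continuous fun x : G => a⁻¹ * x := continuous_const.mul continuous_id
    have hV : (fun x : G => a⁻¹ * x) ⁻¹' W ∈ 𝓝 a := by
      apply (hcont.continuousAt (x := a)).preimage_mem_nhds
      have : a⁻¹ * a = 1 := inv_mul_cancel a
      rw [show 𝓝 (a⁻¹ * a) = 𝓝 (1 : G) by rw [this]] at *
      · exact hW
    have hDmL : D \ {a} ∈ L := by
      rw [hLdef, Filter.mem_map]
      have hsub : {n : ℕ | df n = a}.Subsingleton := fun m hm k hk => hdfinj (hm.trans hk.symm)
      have hfin' : {n : ℕ | df n = a}.Finite := hsub.finite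
      rw [Filter.mem_cofinite]
      apply hfin'.subset
      intro n hn
      simp only [Set.mem_compl_iff, Set.mem_preimage, Set.mem_diff,
        Set.mem_singleton_iff] at hn
      by_contra hna
      exact hn ⟨⟨n, rfl⟩, hna⟩
    have hne : ((fun x : G => a⁻¹ * x) ⁻¹' W ∩ (D \ {a})).Nonempty := by
      have hmem : ((fun x : G => a⁻¹ * x) ⁻¹' W ∩ (D \ {a})) ∈ 𝓝 a ⊓ L :=
        Filter.inter_mem (Filter.mem_inf_of_left hV) (Filter.mem_inf_of_right hDmL)
      exact ha.nonempty_of_mem hmem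
    obtain ⟨d, hdW, hdD⟩ := hne
    refine ⟨a⁻¹ * d, ⟨d, hdD, rfl⟩, ?_, hdW⟩
    intro hz
    exact hdD.2 (by rw [← inv_mul_eq_one.mp hz]; exact rfl)
  -- countability of S
  have hDcnt : D.Countable := Set.countable_range df
  have hscnt : ((D ∪ D⁻¹ : Set G)).Countable := by
    refine hDcnt.union ?_
    have := hDcnt.image (fun x : G => x⁻¹)
    rwa [Set.image_inv_eq_inv] at this
  have hsubS : (D ∪ D⁻¹ : Set G) ⊆ (S : Set G) := by
    rintro x (hx | hx)
    · exact hDS hx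
    · have : x⁻¹ ∈ D := hx
      have h2 := S.inv_mem (hDS this)
      rwa [inv_inv] at h2
  haveI hcntsub : Countable ↥(D ∪ D⁻¹ : Set G) := hscnt.to_subtype
  have hFsurj : ∃ F : List ↥(D ∪ D⁻¹ : Set G) → ↥S, Function.Surjective F := by
    refine ⟨fun l => ⟨(l.map Subtype.val).prod, list_prod_mem fun x hx => ?_⟩, ?_⟩
    · obtain ⟨y, _, rfl⟩ := List.mem_map.mp hx
      exact hsubS y.2
    · rintro ⟨x, hx⟩
      have hx' : x ∈ Submonoid.closure ((D : Set G) ∪ D⁻¹) := by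
        rw [← Subgroup.closure_toSubmonoid]
        exact hx
      obtain ⟨l, hl, hprod⟩ := Submonoid.exists_list_of_mem_closure hx'
      refine ⟨l.pmap (fun y hy => (⟨y, hy⟩ : ↥(D ∪ D⁻¹ : Set G))) hl, ?_⟩
      apply Subtype.ext
      show ((l.pmap (fun y hy => (⟨y, hy⟩ : ↥(D ∪ D⁻¹ : Set G))) hl).map Subtype.val).prod = x
      rw [List.map_pmap]
      have hmap : l.pmap (fun (y : G) (_ : y ∈ (D : Set G) ∪ D⁻¹) => y) hl = l.map id :=
        List.pmap_eq_map _
      rw [show (fun (y : G) (hy : y ∈ (D : Set G) ∪ D⁻¹) =>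
          Subtype.val (⟨y, hy⟩ : ↥(D ∪ D⁻¹ : Set G))) = fun y _ => y from rfl] at *
      rw [hmap, List.map_id, hprod]
  obtain ⟨F, hFsurj⟩ := hFsurj
  haveI : Countable ↥S := hFsurj.countable
  haveI : Nonempty ↥S := ⟨1⟩
  obtain ⟨g, hg⟩ := exists_surjective_nat ↥S
  exact AntiC.core (AntiC.buildChain S g hg E hE hES)
    (fun H _ _ _ _ f => hG S H f)
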